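/- Let T be a finite tree on n simplices and let D be any persistence diagram consistent with T. Then there exists a discrete Morse function f: T → [0, n] whose induced persistence diagram equals D. Consequently, the upper bound (n−1)(n−2)⋯(n−2k)/(2^k k!) on the number of persistence equivalence classes of discrete Morse functions with m = 2k+1 critical values on T is attained. -/

import Mathlib

/-- A (flat) discrete Morse function on a graph `G`, given by its values `fv` on
vertices and `fe` on edges: it is monotone, and each value is attained at most
twice, with equal values only on an incident vertex-edge pair. -/
def IsDMF {V : Type*} (G : SimpleGraph V) (fv : V → ℝ) (fe : Sym2 V → ℝ) : Prop :=
  (∀ v : V, ∀ e ∈ G.edgeSet, v ∈ e → fv v ≤ fe e) ∧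
  Function.Injective fv ∧
  (∀ e ∈ G.edgeSet, ∀ e' ∈ G.edgeSet, fe e = fe e' → e = e') ∧
  (∀ v : V, ∀ e ∈ G.edgeSet, fv v = fe e → v ∈ e)

/-- A vertex is critical if no incident edge shares its value. -/
def IsCritVtx {V : Type*} (G : SimpleGraph V) (fv : V → ℝ) (fe : Sym2 V → ℝ)
    (v : V) : Prop :=
  ∀ e ∈ G.edgeSet, v ∈ e → fv v ≠ fe e

/-- An edge is critical if no endpoint shares its value. -/
def IsCritEdge {V : Type*} (G : SimpleGraph V) (fv : V → ℝ) (fe : Sym2 V → ℝ)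
    (e : Sym2 V) : Prop :=
  e ∈ G.edgeSet ∧ ∀ v ∈ e, fv v ≠ fe e

/-- A critical value is a value of a critical simplex. -/
def IsCritValue {V : Type*} (G : SimpleGraph V) (fv : V → ℝ) (fe : Sym2 V → ℝ)
    (x : ℝ) : Prop :=
  (∃ v : V, IsCritVtx G fv fe v ∧ fv v = x) ∨
  (∃ e : Sym2 V, IsCritEdge G fv fe e ∧ fe e = x)

/-- The graph of the level subcomplex at level `a` (edges of value ≤ a). -/
def levelGraph {V : Type*} (G : SimpleGraph V) (fe : Sym2 V → ℝ) (a : ℝ) :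
    SimpleGraph V :=
  SimpleGraph.fromEdgeSet {e | e ∈ G.edgeSet ∧ fe e ≤ a}

/-- The graph of the part of the filtration strictly below level `a`. -/
def levelGraphLt {V : Type*} (G : SimpleGraph V) (fe : Sym2 V → ℝ) (a : ℝ) :
    SimpleGraph V :=
  SimpleGraph.fromEdgeSet {e | e ∈ G.edgeSet ∧ fe e < a}

/-- The homology class born at the critical vertex `v` dies at the critical edge
`e`: just below level `f(e)`, `e` joins two distinct components, `v` is the
minimum-value vertex of its component, and the other component contains a vertex
of strictly smaller value. -/
def Dies {V : Type*} (G : SimpleGraph V) (fv : V → ℝ) (fe : Sym2 V → ℝ)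
    (v : V) (e : Sym2 V) : Prop :=
  ∃ a b : V, e = s(a, b) ∧
    ¬ (levelGraphLt G fe (fe e)).Reachable a b ∧
    (levelGraphLt G fe (fe e)).Reachable a v ∧
    (∀ x : V, (levelGraphLt G fe (fe e)).Reachable a x → fv v ≤ fv x) ∧
    (∃ u : V, (levelGraphLt G fe (fe e)).Reachable b u ∧ fv u < fv v)

/-- The finite part of the degree-0 persistence diagram: pairs (birth, death). -/
def D0fin {V : Type*} (G : SimpleGraph V) (fv : V → ℝ) (fe : Sym2 V → ℝ) :
    Set (ℝ × ℝ) :=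
  {p | ∃ (v : V) (e : Sym2 V), IsCritVtx G fv fe v ∧ IsCritEdge G fv fe e ∧
    fv v = p.1 ∧ fe e = p.2 ∧ Dies G fv fe v e}

/-- Birth times of essential degree-0 classes (components that never die). -/
def D0inf {V : Type*} (G : SimpleGraph V) (fv : V → ℝ) (fe : Sym2 V → ℝ) :
    Set ℝ :=
  {x | ∃ v : V, IsCritVtx G fv fe v ∧ fv v = x ∧ ∀ e : Sym2 V, ¬ Dies G fv fe v e}

/-- Birth times of degree-1 classes: critical edges that do not merge components. -/
def D1birth {V : Type*} (G : SimpleGraph V) (fv : V → ℝ) (fe : Sym2 V → ℝ) :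
    Set ℝ :=
  {x | ∃ e : Sym2 V, IsCritEdge G fv fe e ∧ fe e = x ∧ ¬ ∃ v : V, Dies G fv fe v e}

/-- b₀ of the level subcomplex at `a`: components of the level graph containing a
vertex of value ≤ a. -/
noncomputable def levelB0 {V : Type*} (G : SimpleGraph V) (fv : V → ℝ)
    (fe : Sym2 V → ℝ) (a : ℝ) : ℕ :=
  {C : (levelGraph G fe a).ConnectedComponent |
    ∃ u : V, fv u ≤ a ∧ (levelGraph G fe a).connectedComponentMk u = C}.ncard

/-- b₁ of the level subcomplex at `a`, via the Euler characteristic. -/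
noncomputable def levelB1 {V : Type*} (G : SimpleGraph V) (fv : V → ℝ)
    (fe : Sym2 V → ℝ) (a : ℝ) : ℤ :=
  ({e : Sym2 V | e ∈ G.edgeSet ∧ fe e ≤ a}.ncard : ℤ) -
    ({u : V | fv u ≤ a}.ncard : ℤ) + (levelB0 G fv fe a : ℤ)



open SimpleGraph

lemma exists_skel {V : Type*} [Fintype V] [DecidableEq V] (T : SimpleGraph V)
    (hT : T.IsTree) :
    ∃ (idx : V → ℕ) (vtx : ℕ → V) (P : V → V),
      (∀ w, vtx (idx w) = w) ∧
      (∀ i, i < Fintype.card V → idx (vtx i) = i) ∧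
      (∀ w, idx w < Fintype.card V) ∧
      (∀ w, idx w ≠ 0 → T.Adj (P w) w ∧ idx (P w) < idx w) ∧
      (∀ x w, T.Adj x w → idx x < idx w → x = P w) := by
  classical
  have hne : Nonempty V := hT.isConnected.nonempty
  set N := Fintype.card V with hN
  have hNpos : 0 < N := Fintype.card_pos
  obtain ⟨r⟩ := hne
  choose p hp hup using fun w => hT.existsUnique_path w r
  set len : V → ℕ := fun w => (p w).length with hlen
  have hlenr : len r = 0 := by
    have h0 : (Walk.nil : T.Walk r r).IsPath := Walk.IsPath.nil
    have := hup r Walk.nil h0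
    simp [hlen, ← this]
  have hlen0 : ∀ w, len w = 0 → w = r := fun w h => Walk.eq_of_length_eq_zero h
  set f0 : V → ℕ := fun w => ((Fintype.equivFin V) w : ℕ) with hf0
  have hf0lt : ∀ w, f0 w < N := fun w => ((Fintype.equivFin V) w).2
  have hf0inj : Function.Injective f0 := by
    intro a b hab
    exact (Fintype.equivFin V).injective (Fin.ext hab)
  set key : V → ℕ := fun w => N * len w + f0 w with hkey
  have keyinj : Function.Injective key := by
    intro a b hab
    simp only [hkey] at hab
    have h1 : len a = len b := by
      have := congrArg (· / N) hab
      simpa [Nat.mul_add_div hNpos, Nat.div_eq_of_lt (hf0lt a), Nat.div_eq_of_lt (hf0lt b)]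
        using this
    rw [h1] at hab
    exact hf0inj (by omega)
  have hkeylt1 : ∀ x y, len x < len y → key x < key y := by
    intro x y hxy
    have : N * len x + N ≤ N * len y := by
      calc N * len x + N = N * (len x + 1) := by ring
      _ ≤ N * len y := Nat.mul_le_mul_left _ (by omega)
    have := hf0lt x
    simp only [hkey]
    omega
  set P : V → V := fun w => (p w).getVert 1 with hP
  have hnotnil : ∀ w, w ≠ r → ¬ (p w).Nil := by
    intro w hw h
    exact hw (hlen0 w (Walk.nil_iff_length_eq.1 h))
  have hadjP : ∀ w, w ≠ r → T.Adj w (P w) := by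
    intro w hw
    have h0 : 0 < (p w).length := by
      rcases Nat.eq_zero_or_pos (p w).length with h | h
      · exact absurd (hlen0 w h) hw
      · exact h
    have := (p w).adj_getVert_succ h0
    simpa [Walk.getVert_zero] using this
  have hlenP : ∀ w, w ≠ r → len (P w) + 1 = len w := by
    intro w hw
    have hnn := hnotnil w hw
    have htp : (p w).tail.IsPath := (hp w).tail
    have := hup (P w) (p w).tail htp
    have hl : (p w).tail.length + 1 = (p w).length := Walk.length_tail_add_one hnn
    simp only [hlen]
    rw [← this]
    exact hl
  have hparu : ∀ x w, T.Adj x w → key x < key w → x = P w := by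
    intro x w hadj hkxw
    by_cases hmem : w ∈ (p x).support
    · exfalso
      have hdp : ((p x).dropUntil w hmem).IsPath := (hp x).dropUntil hmem
      have heq := hup w ((p x).dropUntil w hmem) hdp
      have hlw : (p w).length = ((p x).dropUntil w hmem).length := by rw [← heq]
      have hspec := congrArg Walk.length ((p x).take_spec hmem)
      rw [Walk.length_append] at hspec
      have htne : ((p x).takeUntil w hmem).length ≠ 0 := by
        intro h0
        exact hadj.ne (Walk.eq_of_length_eq_zero h0)
      have : len w < len x := show (p w).length < (p x).length by omega
      exact absurd hkxw (not_lt.2 (le_of_lt (hkeylt1 w x this)))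
    · have hq : (Walk.cons hadj.symm (p x)).IsPath :=
        (Walk.cons_isPath_iff _ _).2 ⟨hp x, hmem⟩
      have heq := hup w (Walk.cons hadj.symm (p x)) hq
      have : P w = (Walk.cons hadj.symm (p x)).getVert 1 := by
        simp only [hP]; rw [← heq]
      rw [this]
      simp [Walk.getVert_cons_succ, Walk.getVert_zero]
  have hkeyr : ∀ w, w ≠ r → key r < key w := by
    intro w hw
    apply hkeylt1
    rw [hlenr]
    rcases Nat.eq_zero_or_pos (len w) with h | h
    · exact absurd (hlen0 w h) hw
    · exact h
  letI : LinearOrder V := LinearOrder.lift' key keyinj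
  have hle : ∀ x y : V, x ≤ y ↔ key x ≤ key y := fun x y => Iff.rfl
  have hlt : ∀ x y : V, x < y ↔ key x < key y := by
    intro x y
    rw [lt_iff_le_not_ge, hle, hle]
    omega
  have hcard : Fintype.card V = N := rfl
  set σ := monoEquivOfFin V hcard with hσ
  set idx : V → ℕ := fun w => (σ.symm w : ℕ) with hidx
  set vtx : ℕ → V := fun i => if h : i < N then σ ⟨i, h⟩ else r with hvtx
  have hidxlt : ∀ w, idx w < N := fun w => (σ.symm w).2
  have hleft : ∀ w, vtx (idx w) = w := by
    intro w
    simp only [hvtx, hidx, dif_pos (σ.symm w).2]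
    simp
  have hright : ∀ i, i < N → idx (vtx i) = i := by
    intro i hi
    simp only [hvtx, hidx, dif_pos hi]
    simp
  have hidxmono : ∀ x y : V, idx x < idx y ↔ key x < key y := by
    intro x y
    rw [← hlt]
    constructor
    · intro h
      have : σ.symm x < σ.symm y := h
      have := σ.symm.strictMono.lt_iff_lt.1 this
      exact this
    · intro h
      exact σ.symm.strictMono h
  refine ⟨idx, vtx, P, hleft, hright, hidxlt, ?_, ?_⟩
  · intro w hw
    have hwr : w ≠ r := by
      intro h
      apply hw
      subst h
      -- idx r = 0
      have : ∀ i : Fin N, σ.symm w ≤ i := by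
        intro i
        by_contra hcon
        push_neg at hcon
        have : σ i < σ (σ.symm w) := σ.strictMono hcon
        rw [σ.apply_symm_apply] at this
        rw [hlt] at this
        rcases eq_or_ne (σ i) w with h' | h'
        · rw [h'] at this; omega
        · exact absurd this (not_lt.2 (le_of_lt (hkeyr _ h')))
      have h2 : (σ.symm w : ℕ) ≤ 0 := this ⟨0, hNpos⟩
      simp only [hidx]
      omega
    have h1 := (hadjP w hwr).symm
    refine ⟨h1, ?_⟩
    rw [hidxmono]
    apply hkeylt1
    have := hlenP w hwr
    omega
  · intro x w hadj hxw
    exact hparu x w hadj ((hidxmono x w).1 hxw)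

/-- `x` is a descendant of `w` (iterated parent reaches `w`). -/
def WRel {V : Type*} (idx : V → ℕ) (P : V → V) (w x : V) : Prop :=
  Relation.ReflTransGen (fun a b => idx a ≠ 0 ∧ b = P a) x w

namespace WRel

variable {V : Type*} {idx : V → ℕ} {P : V → V} {w x y : V}

lemma rfl' : WRel idx P w w := Relation.ReflTransGen.refl

lemma idx_le (hPlt : ∀ v, idx v ≠ 0 → idx (P v) < idx v)
    (h : WRel idx P w x) : idx w ≤ idx x := by
  induction h with
  | refl => exact le_rfl
  | tail h' step ih =>
    rcases step with ⟨h1, h2⟩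
    subst h2
    exact le_trans (le_of_lt (hPlt _ h1)) ih

lemma child (h : WRel idx P w x) (hy : idx y ≠ 0) (hPy : P y = x) :
    WRel idx P w y :=
  Relation.ReflTransGen.head ⟨hy, hPy.symm⟩ h

lemma parent (h : WRel idx P w x) (hxw : x ≠ w) :
    idx x ≠ 0 ∧ WRel idx P w (P x) := by
  rcases h.cases_head with h1 | ⟨b, ⟨h2, h3⟩, h4⟩
  · exact absurd h1 hxw
  · subst h3; exact ⟨h2, h4⟩

lemma trans' (h1 : WRel idx P w x) (h2 : WRel idx P x y) : WRel idx P w y :=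
  Relation.ReflTransGen.trans h2 h1

end WRel

lemma levelGraphLt_adj {V : Type*} (T : SimpleGraph V) (fe : Sym2 V → ℝ) (a : ℝ)
    {x y : V} : (levelGraphLt T fe a).Adj x y ↔ T.Adj x y ∧ fe s(x, y) < a ∧ x ≠ y := by
  simp [levelGraphLt, SimpleGraph.fromEdgeSet_adj, Set.mem_setOf_eq, and_assoc]

section Confine

variable {V : Type*} {T : SimpleGraph V} {idx : V → ℕ} {P : V → V} {fe : Sym2 V → ℝ}

lemma confine_adj (hinj : Function.Injective idx)
    (hparu : ∀ x w, T.Adj x w → idx x < idx w → x = P w)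
    {w : V} (hw : idx w ≠ 0) {a : ℝ} (ha : a ≤ fe s(P w, w))
    {x y : V} (hadj : (levelGraphLt T fe a).Adj x y)
    (hx : WRel idx P w x) : WRel idx P w y := by
  rw [levelGraphLt_adj] at hadj
  obtain ⟨hTadj, hfe, hne⟩ := hadj
  rcases lt_trichotomy (idx x) (idx y) with hlt | heq | hgt
  · exact hx.child (by omega) (hparu x y hTadj hlt).symm
  · exact absurd (hinj heq) hne
  · have hyx : y = P x := hparu y x hTadj.symm hgt
    by_cases hxw : x = w
    · exfalso
      subst hxw
      rw [hyx] at hfe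
      rw [Sym2.eq_swap] at hfe
      exact absurd hfe (not_lt.2 ha)
    · rw [hyx]
      exact (hx.parent hxw).2

lemma confine_reachable (hinj : Function.Injective idx)
    (hparu : ∀ x w, T.Adj x w → idx x < idx w → x = P w)
    {w : V} (hw : idx w ≠ 0) {a : ℝ} (ha : a ≤ fe s(P w, w))
    {x y : V} (hreach : (levelGraphLt T fe a).Reachable x y) :
    WRel idx P w x ↔ WRel idx P w y := by
  obtain ⟨pw⟩ := hreach
  induction pw with
  | nil => exact Iff.rfl
  | cons hadj p ih =>
    refine Iff.trans ?_ ih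
    constructor
    · exact confine_adj hinj hparu hw ha hadj
    · exact confine_adj hinj hparu hw ha hadj.symm

end Confine



noncomputable def vval (n N k : ℕ) (cc : ℕ → ℕ) (i : ℕ) : ℝ :=
  if i = 0 then 0 else if i ≤ k then (cc i : ℝ) else (n : ℝ) - 1 + (i : ℝ) / (N : ℝ)

noncomputable def eval' (n N k : ℕ) (dd : ℕ → ℕ) (i : ℕ) : ℝ :=
  if i ≤ k then (dd i : ℝ) else (n : ℝ) - 1 + (i : ℝ) / (N : ℝ)

section Numeric

variable {n N k : ℕ} {cc dd : ℕ → ℕ}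

lemma frac_bounds (hkN : k < N) (hn2 : n + 1 = 2 * N) {i : ℕ} (h1 : 1 ≤ i) (h2 : i < N) :
    (n : ℝ) - 1 < (n : ℝ) - 1 + (i : ℝ) / (N : ℝ) ∧
      (n : ℝ) - 1 + (i : ℝ) / (N : ℝ) < (n : ℝ) := by
  have hN0 : 0 < N := by omega
  have hNpos : (0 : ℝ) < (N : ℝ) := by exact_mod_cast hN0
  have hipos : (0 : ℝ) < (i : ℝ) := by exact_mod_cast h1
  have hfrac1 : (0 : ℝ) < (i : ℝ) / (N : ℝ) := by positivity
  have hfrac2 : (i : ℝ) / (N : ℝ) < 1 := by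
    rw [div_lt_one hNpos]; exact_mod_cast h2
  constructor <;> linarith

lemma cc_le_pred (hcd : ∀ i, 1 ≤ i → i ≤ k → 1 ≤ cc i ∧ cc i < dd i ∧ dd i ≤ n)
    {p : ℕ} (h1 : 1 ≤ p) (h2 : p ≤ k) : (cc p : ℝ) ≤ (n : ℝ) - 1 := by
  obtain ⟨-, hlt, hle⟩ := hcd p h1 h2
  have : cc p + 1 ≤ n := by omega
  have := (Nat.cast_le (α := ℝ)).2 this
  push_cast at this
  linarith

lemma vval_low {p : ℕ} (h1 : 1 ≤ p) (h2 : p ≤ k) : vval n N k cc p = (cc p : ℝ) := by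
  unfold vval
  rw [if_neg (by omega), if_pos h2]

lemma vval_high {p : ℕ} (h : k < p) :
    vval n N k cc p = (n : ℝ) - 1 + (p : ℝ) / (N : ℝ) := by
  unfold vval
  rw [if_neg (by omega), if_neg (by omega)]

lemma eval_low {p : ℕ} (h2 : p ≤ k) : eval' n N k dd p = (dd p : ℝ) := by
  simp [eval', h2]

lemma eval_high {p : ℕ} (h : k < p) :
    eval' n N k dd p = (n : ℝ) - 1 + (p : ℝ) / (N : ℝ) := by
  unfold eval'
  rw [if_neg (by omega)]

lemma vval_zero : vval n N k cc 0 = 0 := by simp [vval]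

lemma vval_eq_eval_of_high {p : ℕ} (h : k < p) :
    vval n N k cc p = eval' n N k dd p := by
  rw [vval_high h, eval_high h]

lemma vval_mono (hkN : k < N) (hn2 : n + 1 = 2 * N)
    (hcd : ∀ i, 1 ≤ i → i ≤ k → 1 ≤ cc i ∧ cc i < dd i ∧ dd i ≤ n)
    (hmono : ∀ i j, 1 ≤ i → i < j → j ≤ k → cc i < cc j)
    {p q : ℕ} (hpq : p < q) (hqN : q < N) : vval n N k cc p < vval n N k cc q := by
  rcases Nat.eq_zero_or_pos p with hp0 | hp1
  · subst hp0
    rw [vval_zero]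
    rcases le_or_gt q k with hq | hq
    · rw [vval_low hpq hq]
      have := (hcd q hpq hq).1
      exact_mod_cast by omega
    · rw [vval_high hq]
      have := frac_bounds hkN hn2 (by omega : 1 ≤ q) hqN
      have hn1 : 1 ≤ n := by omega
      have : (1 : ℝ) ≤ (n : ℝ) := by exact_mod_cast hn1
      linarith [this, (frac_bounds hkN hn2 (by omega : 1 ≤ q) hqN).1]
  · rcases le_or_gt q k with hq | hq
    · rw [vval_low hp1 (by omega), vval_low (by omega) hq]
      exact_mod_cast hmono p q hp1 hpq hq
    · rcases le_or_gt p k with hp | hp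
      · rw [vval_low hp1 hp, vval_high hq]
        have h1 := cc_le_pred hcd hp1 hp
        have h2 := (frac_bounds hkN hn2 (by omega : 1 ≤ q) hqN).1
        linarith
      · rw [vval_high hp, vval_high hq]
        have hN0 : (0:ℝ) < (N:ℝ) := by exact_mod_cast (by omega : 0 < N)
        have h4 : (p : ℝ) < (q : ℝ) := by exact_mod_cast hpq
        have h5 := (div_lt_div_iff_of_pos_right hN0).2 h4
        linarith

lemma vval_mono_le (hkN : k < N) (hn2 : n + 1 = 2 * N)
    (hcd : ∀ i, 1 ≤ i → i ≤ k → 1 ≤ cc i ∧ cc i < dd i ∧ dd i ≤ n)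
    (hmono : ∀ i j, 1 ≤ i → i < j → j ≤ k → cc i < cc j)
    {p q : ℕ} (hpq : p ≤ q) (hqN : q < N) : vval n N k cc p ≤ vval n N k cc q := by
  rcases Nat.lt_or_ge p q with h | h
  · exact le_of_lt (vval_mono hkN hn2 hcd hmono h hqN)
  · have : p = q := by omega
    rw [this]

lemma vval_lt_eval (hkN : k < N) (hn2 : n + 1 = 2 * N)
    (hcd : ∀ i, 1 ≤ i → i ≤ k → 1 ≤ cc i ∧ cc i < dd i ∧ dd i ≤ n)
    (hmono : ∀ i j, 1 ≤ i → i < j → j ≤ k → cc i < cc j)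
    {p q : ℕ} (hpq : p < q) (hqN : q < N) : vval n N k cc p < eval' n N k dd q := by
  rcases le_or_gt q k with hq | hq
  · rw [eval_low hq]
    have h2 := (hcd q (by omega) hq).2.1
    rcases Nat.eq_zero_or_pos p with hp0 | hp1
    · subst hp0; rw [vval_zero]
      have := (hcd q (by omega) hq).1
      exact_mod_cast by omega
    · rw [vval_low hp1 (by omega)]
      have h3 := hmono p q hp1 hpq hq
      exact_mod_cast by omega
  · rw [eval_high hq, ← vval_high (cc := cc) hq]
    exact vval_mono hkN hn2 hcd hmono hpq hqN

lemma vval_le_eval (hkN : k < N) (hn2 : n + 1 = 2 * N)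
    (hcd : ∀ i, 1 ≤ i → i ≤ k → 1 ≤ cc i ∧ cc i < dd i ∧ dd i ≤ n)
    (hmono : ∀ i j, 1 ≤ i → i < j → j ≤ k → cc i < cc j)
    {p q : ℕ} (hpq : p ≤ q) (hq1 : 1 ≤ q) (hqN : q < N) :
    vval n N k cc p ≤ eval' n N k dd q := by
  rcases Nat.lt_or_ge p q with h | h
  · exact le_of_lt (vval_lt_eval hkN hn2 hcd hmono h hqN)
  · have hpq' : p = q := by omega
    subst hpq'
    rcases le_or_gt p k with hp | hp
    · rw [vval_low hq1 hp, eval_low hp]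
      exact_mod_cast le_of_lt (hcd p hq1 hp).2.1
    · exact le_of_eq (vval_eq_eval_of_high hp)

lemma vval_eq_eval (hkN : k < N) (hn2 : n + 1 = 2 * N)
    (hcd : ∀ i, 1 ≤ i → i ≤ k → 1 ≤ cc i ∧ cc i < dd i ∧ dd i ≤ n)
    (hmono : ∀ i j, 1 ≤ i → i < j → j ≤ k → cc i < cc j)
    (hdist : ∀ i j, 1 ≤ i → i ≤ k → 1 ≤ j → j ≤ k → i ≠ j →
      cc i ≠ cc j ∧ cc i ≠ dd j ∧ dd i ≠ cc j ∧ dd i ≠ dd j)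
    {p q : ℕ} (hq1 : 1 ≤ q) (hpN : p < N) (hqN : q < N)
    (heq : vval n N k cc p = eval' n N k dd q) : p = q ∧ k < q := by
  rcases Nat.lt_or_ge p q with h | h
  · exact absurd heq (ne_of_lt (vval_lt_eval hkN hn2 hcd hmono h hqN))
  · rcases le_or_gt q k with hq | hq
    · exfalso
      rw [eval_low hq] at heq
      rcases Nat.eq_zero_or_pos p with hp0 | hp1
      · subst hp0; rw [vval_zero] at heq
        have := (hcd q hq1 hq).2.1
        have : 1 ≤ dd q := by omega
        have : (1:ℝ) ≤ (dd q : ℝ) := by exact_mod_cast this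
        linarith
      · rcases le_or_gt p k with hp | hp
        · rw [vval_low hp1 hp] at heq
          have hccdd : cc p = dd q := by exact_mod_cast heq
          rcases eq_or_ne p q with hpq | hpq
          · subst hpq; exact absurd hccdd (Nat.ne_of_lt (hcd p hp1 hp).2.1)
          · exact absurd hccdd (hdist p q hp1 hp hq1 hq hpq).2.1
        · rw [vval_high hp] at heq
          have hb := frac_bounds hkN hn2 (by omega : 1 ≤ p) hpN
          have hdn := (hcd q hq1 hq).2.2
          rcases Nat.lt_or_ge (dd q) n with hlt | hge
          · have : dd q ≤ n - 1 := by omega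
            have h1 : (dd q : ℝ) ≤ (n : ℝ) - 1 := by
              have : dd q + 1 ≤ n := by omega
              have := (Nat.cast_le (α := ℝ)).2 this
              push_cast at this; linarith
            linarith [hb.1]
          · have : dd q = n := by omega
            rw [this] at heq
            linarith [hb.2]
    · -- q > k, and p ≥ q > k
      rw [eval_high hq, vval_high (by omega : k < p)] at heq
      have hN0 : (0:ℝ) < (N:ℝ) := by exact_mod_cast (by omega : 0 < N)
      have h2 : (p : ℝ) / (N:ℝ) = (q : ℝ) / (N:ℝ) := by linarith
      have h3 : p = q := by field_simp at h2; exact_mod_cast h2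
      exact ⟨h3, hq⟩

lemma eval_inj (hkN : k < N) (hn2 : n + 1 = 2 * N)
    (hcd : ∀ i, 1 ≤ i → i ≤ k → 1 ≤ cc i ∧ cc i < dd i ∧ dd i ≤ n)
    (hdist : ∀ i j, 1 ≤ i → i ≤ k → 1 ≤ j → j ≤ k → i ≠ j →
      cc i ≠ cc j ∧ cc i ≠ dd j ∧ dd i ≠ cc j ∧ dd i ≠ dd j)
    {p q : ℕ} (hp1 : 1 ≤ p) (hpN : p < N) (hq1 : 1 ≤ q) (hqN : q < N)
    (heq : eval' n N k dd p = eval' n N k dd q) : p = q := by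
  by_contra hpq
  rcases le_or_gt p k with hp | hp <;> rcases le_or_gt q k with hq | hq
  · rw [eval_low hp, eval_low hq] at heq
    exact (hdist p q hp1 hp hq1 hq hpq).2.2.2 (by exact_mod_cast heq)
  · rw [eval_low hp, eval_high hq] at heq
    have hb := frac_bounds hkN hn2 (by omega : 1 ≤ q) hqN
    have hdn := (hcd p hp1 hp).2.2
    rcases Nat.lt_or_ge (dd p) n with hlt | hge
    · have h1 : (dd p : ℝ) ≤ (n : ℝ) - 1 := by
        have : dd p + 1 ≤ n := by omega
        have := (Nat.cast_le (α := ℝ)).2 this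
        push_cast at this; linarith
      linarith [hb.1]
    · have : dd p = n := by omega
      rw [this] at heq
      linarith [hb.2]
  · rw [eval_high hp, eval_low hq] at heq
    have hb := frac_bounds hkN hn2 (by omega : 1 ≤ p) hpN
    have hdn := (hcd q hq1 hq).2.2
    rcases Nat.lt_or_ge (dd q) n with hlt | hge
    · have h1 : (dd q : ℝ) ≤ (n : ℝ) - 1 := by
        have : dd q + 1 ≤ n := by omega
        have := (Nat.cast_le (α := ℝ)).2 this
        push_cast at this; linarith
      linarith [hb.1]
    · have : dd q = n := by omega
      rw [this] at heq
      linarith [hb.2]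
  · rw [eval_high hp, eval_high hq] at heq
    have hN0 : (0:ℝ) < (N:ℝ) := by exact_mod_cast (by omega : 0 < N)
    have h2 : (p : ℝ) / (N:ℝ) = (q : ℝ) / (N:ℝ) := by linarith
    have h3 : p = q := by field_simp at h2; exact_mod_cast h2
    exact hpq h3

lemma vval_nonneg (hkN : k < N) (hn2 : n + 1 = 2 * N) (p : ℕ) :
    0 ≤ vval n N k cc p := by
  rcases Nat.eq_zero_or_pos p with h0 | h1
  · subst h0; rw [vval_zero]
  · rcases le_or_gt p k with hp | hp
    · rw [vval_low h1 hp]; positivity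
    · rw [vval_high hp]
      have hN0 : (0:ℝ) < (N:ℝ) := by exact_mod_cast (by omega : 0 < N)
      have h1n : (1:ℝ) ≤ (n:ℝ) := by exact_mod_cast (by omega : 1 ≤ n)
      have : (0:ℝ) ≤ (p:ℝ) / (N:ℝ) := by positivity
      linarith

lemma eval_le_n (hkN : k < N) (hn2 : n + 1 = 2 * N)
    (hcd : ∀ i, 1 ≤ i → i ≤ k → 1 ≤ cc i ∧ cc i < dd i ∧ dd i ≤ n)
    {q : ℕ} (hq1 : 1 ≤ q) (hqN : q < N) : eval' n N k dd q ≤ (n : ℝ) := by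
  rcases le_or_gt q k with hq | hq
  · rw [eval_low hq]
    exact_mod_cast (hcd q hq1 hq).2.2
  · rw [eval_high hq]
    exact le_of_lt (frac_bounds hkN hn2 hq1 hqN).2

end Numeric

/-- realization: For any persistence diagram D consistent with a
tree T on n simplices, there is a discrete Morse function f : T → [0,n] whose
induced persistence diagram is exactly D: the finite (birth, death) pairs of f,
computed from critical vertices and the critical edges that kill them, are
precisely the pairs of D (the essential class (0,∞) being born at the minimum
value 0).  In particular the upper bound on the number of persistence
equivalence classes with m = 2k+1 critical values is attained. -/
theorem stmt_16 {V : Type*} [Fintype V] [Nonempty V] [DecidableEq V]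
    (T : SimpleGraph V) [DecidableRel T.Adj] (hT : T.IsTree)
    (n : ℕ) (hn : n = Fintype.card V + T.edgeFinset.card)
    (D : Finset (ℕ × ℕ))
    (hD1 : ∀ p ∈ D, 1 ≤ p.1 ∧ p.2 ≤ n ∧ p.1 < p.2)
    (hD2 : ∀ p ∈ D, ∀ q ∈ D, p ≠ q →
      p.1 ≠ q.1 ∧ p.1 ≠ q.2 ∧ p.2 ≠ q.1 ∧ p.2 ≠ q.2)
    (hDcard : 2 * D.card + 1 ≤ n) :
    ∃ (fv : V → ℝ) (fe : Sym2 V → ℝ), IsDMF T fv fe ∧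
      (∀ u : V, 0 ≤ fv u) ∧ (∀ e ∈ T.edgeSet, fe e ≤ (n : ℝ)) ∧
      (∃ v₀ : V, fv v₀ = 0) ∧
      (∀ x : ℝ, IsCritValue T fv fe x → ∃ j : ℕ, (j : ℝ) = x) ∧
      (∀ c d : ℕ, ((c, d) ∈ D ↔
        ∃ (v : V) (e : Sym2 V), IsCritVtx T fv fe v ∧ IsCritEdge T fv fe e ∧
          fv v = (c : ℝ) ∧ fe e = (d : ℝ) ∧ Dies T fv fe v e)) := by
  classical
  obtain ⟨idx, vtx, P, hleft, hright, hidxlt, hPfacts, hparu⟩ := exists_skel T hT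
  have hNpos : 0 < Fintype.card V := Fintype.card_pos
  set N := Fintype.card V with hNdef
  have hidxinj : Function.Injective idx := Function.LeftInverse.injective hleft
  have hEcard : T.edgeFinset.card + 1 = N := hT.card_edgeFinset
  have hn2 : n + 1 = 2 * N := by omega
  set k := D.card with hk
  have hkN : k < N := by omega
  have hPlt' : ∀ v, idx v ≠ 0 → idx (P v) < idx v := fun v h => (hPfacts v h).2
  have hidxN : ∀ w, idx w < N := hidxlt
  -- sorted enumeration of the diagram
  have hfstinj : ∀ p ∈ D, ∀ q ∈ D, p.1 = q.1 → p = q := by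
    intro p hp q hq h
    by_contra hne
    exact (hD2 p hp q hq hne).1 h
  set F := D.image Prod.fst with hF
  have hFcard : F.card = k := Finset.card_image_of_injOn fun p hp q hq h => hfstinj p hp q hq h
  have hmemF : ∀ i : Fin k, ∃ p, p ∈ D ∧ p.1 = F.orderEmbOfFin hFcard i := by
    intro i
    have h1 := F.orderEmbOfFin_mem hFcard i
    obtain ⟨p, hp, hp1⟩ := Finset.mem_image.1 h1
    exact ⟨p, hp, hp1⟩
  choose pr hprD hpr1 using hmemF
  set cc : ℕ → ℕ := fun i => if h : 1 ≤ i ∧ i ≤ k then (pr ⟨i - 1, by omega⟩).1 else 0 with hcc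
  set dd : ℕ → ℕ := fun i => if h : 1 ≤ i ∧ i ≤ k then (pr ⟨i - 1, by omega⟩).2 else 0 with hdd
  have hccdd : ∀ i (h1 : 1 ≤ i) (h2 : i ≤ k), (cc i, dd i) = pr ⟨i - 1, by omega⟩ := by
    intro i h1 h2
    simp only [hcc, hdd, dif_pos (⟨h1, h2⟩ : 1 ≤ i ∧ i ≤ k)]
  have hpairD : ∀ i, 1 ≤ i → i ≤ k → (cc i, dd i) ∈ D := by
    intro i h1 h2
    rw [hccdd i h1 h2]
    exact hprD _
  have hcd : ∀ i, 1 ≤ i → i ≤ k → 1 ≤ cc i ∧ cc i < dd i ∧ dd i ≤ n := by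
    intro i h1 h2
    have := hD1 _ (hpairD i h1 h2)
    exact ⟨this.1, this.2.2, this.2.1⟩
  have hccfst : ∀ i (h1 : 1 ≤ i) (h2 : i ≤ k),
      cc i = F.orderEmbOfFin hFcard ⟨i - 1, by omega⟩ := by
    intro i h1 h2
    have := congrArg Prod.fst (hccdd i h1 h2)
    simpa [hpr1] using this
  have hccmono : ∀ i j, 1 ≤ i → i < j → j ≤ k → cc i < cc j := by
    intro i j h1 hij hj
    rw [hccfst i h1 (by omega), hccfst j (by omega) hj]
    exact (F.orderEmbOfFin hFcard).strictMono (by simp [Fin.lt_def]; omega)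
  have hprinj : ∀ i j : Fin k, i ≠ j → pr i ≠ pr j := by
    intro i j hij hcon
    apply hij
    have h1 := hpr1 i
    rw [hcon, hpr1 j] at h1
    exact (F.orderEmbOfFin hFcard).injective h1.symm
  have hdist : ∀ i j, 1 ≤ i → i ≤ k → 1 ≤ j → j ≤ k → i ≠ j →
      cc i ≠ cc j ∧ cc i ≠ dd j ∧ dd i ≠ cc j ∧ dd i ≠ dd j := by
    intro i j hi1 hi2 hj1 hj2 hij
    have h1 := hpairD i hi1 hi2
    have h2 := hpairD j hj1 hj2
    have hne : ((cc i, dd i) : ℕ × ℕ) ≠ (cc j, dd j) := by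
      rw [hccdd i hi1 hi2, hccdd j hj1 hj2]
      exact hprinj _ _ (by simp only [ne_eq, Fin.mk.injEq]; omega)
    have := hD2 _ h1 _ h2 hne
    simpa using this
  have hsurp : ∀ p ∈ D, ∃ i, 1 ≤ i ∧ i ≤ k ∧ cc i = p.1 ∧ dd i = p.2 := by
    intro p hp
    have hp1 : p.1 ∈ F := Finset.mem_image_of_mem _ hp
    have hr : (p.1 : ℕ) ∈ Set.range (F.orderEmbOfFin hFcard) := by
      rw [Finset.range_orderEmbOfFin]
      exact_mod_cast hp1
    obtain ⟨i, hi⟩ := hr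
    have hpri : pr i = p := hfstinj _ (hprD i) _ hp (by rw [hpr1 i, hi])
    have hik : (i : ℕ) < k := i.2
    have hfin : (⟨(i : ℕ) + 1 - 1, by omega⟩ : Fin k) = i := by
      apply Fin.ext; simp
    have h := hccdd ((i : ℕ) + 1) (by omega) (by omega)
    rw [hfin, hpri] at h
    exact ⟨(i : ℕ) + 1, by omega, by omega, congrArg Prod.fst h, congrArg Prod.snd h⟩
  -- the Morse function
  set fv : V → ℝ := fun w => vval n N k cc (idx w) with hfv
  set fe : Sym2 V → ℝ :=
    Sym2.lift ⟨fun a b => eval' n N k dd (max (idx a) (idx b)),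
      fun a b => congrArg (eval' n N k dd) (max_comm (idx a) (idx b))⟩ with hfe
  have hfeval : ∀ x y : V, fe s(x, y) = eval' n N k dd (max (idx x) (idx y)) := by
    intro x y
    rw [hfe]
    exact Sym2.lift_mk _ _ _
  have hfePar : ∀ z, idx z ≠ 0 → fe s(P z, z) = eval' n N k dd (idx z) := by
    intro z hz
    rw [hfeval]
    congr 1
    have := (hPfacts z hz).2
    omega
  have hdecomp : ∀ e ∈ T.edgeSet, ∃ z, idx z ≠ 0 ∧ e = s(P z, z) := by
    intro e
    refine Sym2.ind (fun x y => ?_) e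
    intro he
    rw [SimpleGraph.mem_edgeSet] at he
    rcases lt_trichotomy (idx x) (idx y) with h | h | h
    · exact ⟨y, by omega, by rw [← hparu x y he h]⟩
    · exact absurd (hidxinj h) he.ne
    · refine ⟨x, by omega, ?_⟩
      rw [← hparu y x he.symm h]
      exact Sym2.eq_swap
  have hconf : ∀ w : V, idx w ≠ 0 → ∀ a : ℝ, a ≤ fe s(P w, w) →
      ∀ x y : V, (levelGraphLt T fe a).Reachable x y →
        (WRel idx P w x ↔ WRel idx P w y) :=
    fun w hw a ha x y hr => confine_reachable hidxinj hparu hw ha hr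
  -- classification of critical cells
  have hcvle : ∀ v : V, IsCritVtx T fv fe v → idx v ≤ k := by
    intro v hv
    by_contra hcon
    push_neg at hcon
    have hz : idx v ≠ 0 := by omega
    have h1 := hv (s(P v, v)) ((T.mem_edgeSet).2 (hPfacts v hz).1)
      (Sym2.mem_mk_right _ _)
    apply h1
    rw [hfePar v hz]
    simp only [hfv]
    exact vval_eq_eval_of_high hcon
  have hcele : ∀ e, IsCritEdge T fv fe e → ∃ z, 1 ≤ idx z ∧ idx z ≤ k ∧ e = s(P z, z) := by
    intro e he
    obtain ⟨z, hz, rfl⟩ := hdecomp e he.1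
    refine ⟨z, by omega, ?_, rfl⟩
    by_contra hcon
    push_neg at hcon
    have h1 := he.2 z (Sym2.mem_mk_right _ _)
    apply h1
    rw [hfePar z hz]
    simp only [hfv]
    exact vval_eq_eval_of_high hcon
  have hcvtx : ∀ v : V, idx v ≤ k → IsCritVtx T fv fe v := by
    intro v hvk e he hmem
    obtain ⟨z, hz, rfl⟩ := hdecomp e he
    rw [hfePar z hz]
    simp only [hfv]
    intro heq
    have hh := vval_eq_eval hkN hn2 hcd hccmono hdist (by omega) (hidxN v) (hidxN z) heq
    rcases Sym2.mem_iff.1 hmem with h | h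
    · have h5 := hPlt' z hz
      have h6 := congrArg idx h
      omega
    · have h6 := congrArg idx h
      omega
  have hcedge : ∀ z : V, 1 ≤ idx z → idx z ≤ k → IsCritEdge T fv fe (s(P z, z)) := by
    intro z h1 h2
    refine ⟨(T.mem_edgeSet).2 (hPfacts z (by omega)).1, ?_⟩
    intro v hmem
    rw [hfePar z (by omega)]
    simp only [hfv]
    intro heq
    have hh := vval_eq_eval hkN hn2 hcd hccmono hdist h1 (hidxN v) (hidxN z) heq
    rcases Sym2.mem_iff.1 hmem with h | h
    · have h5 := hPlt' z (by omega)
      have h6 := congrArg idx h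
      omega
    · have h6 := congrArg idx h
      omega
  -- Dies for the designated pairs
  have hdies : ∀ i, 1 ≤ i → i ≤ k → Dies T fv fe (vtx i) (s(P (vtx i), vtx i)) := by
    intro i h1 h2
    set z := vtx i with hz
    have hzi : idx z = i := hright i (by omega)
    have hz0 : idx z ≠ 0 := by omega
    refine ⟨z, P z, Sym2.eq_swap, ?_, SimpleGraph.Reachable.refl z, ?_,
      ⟨P z, SimpleGraph.Reachable.refl _, ?_⟩⟩
    · intro hreach
      have hW := (hconf z hz0 _ le_rfl _ _ hreach).1 WRel.rfl'
      have h3 := WRel.idx_le hPlt' hW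
      have h4 := hPlt' z hz0
      omega
    · intro x hx
      have hW := (hconf z hz0 _ le_rfl _ _ hx).1 WRel.rfl'
      have hle2 := WRel.idx_le hPlt' hW
      simp only [hfv]
      exact vval_mono_le hkN hn2 hcd hccmono hle2 (hidxN x)
    · simp only [hfv]
      exact vval_mono hkN hn2 hcd hccmono (hPlt' z hz0) (hidxN z)
  refine ⟨fv, fe, ⟨?_, ?_, ?_, ?_⟩, ?_, ?_, ?_, ?_, ?_⟩
  · -- monotone
    intro v e he hmemv
    obtain ⟨z, hz, rfl⟩ := hdecomp e he
    rw [hfePar z hz]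
    rcases Sym2.mem_iff.1 hmemv with h | h
    · rw [h]
      simp only [hfv]
      exact vval_le_eval hkN hn2 hcd hccmono (le_of_lt (hPfacts z hz).2) (by omega) (hidxN z)
    · rw [h]
      simp only [hfv]
      exact vval_le_eval hkN hn2 hcd hccmono le_rfl (by omega) (hidxN z)
  · -- fv injective
    intro a b hab
    simp only [hfv] at hab
    rcases lt_trichotomy (idx a) (idx b) with h | h | h
    · exact absurd hab (ne_of_lt (vval_mono hkN hn2 hcd hccmono h (hidxN b)))
    · exact hidxinj h
    · exact absurd hab.symm (ne_of_lt (vval_mono hkN hn2 hcd hccmono h (hidxN a)))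
  · -- fe injective on edges
    intro e he e' he' heq
    obtain ⟨z, hz, rfl⟩ := hdecomp e he
    obtain ⟨z', hz', rfl⟩ := hdecomp e' he'
    rw [hfePar z hz, hfePar z' hz'] at heq
    have h1 := eval_inj hkN hn2 hcd hdist (by omega) (hidxN z) (by omega) (hidxN z') heq
    rw [hidxinj h1]
  · -- equal values only on incident pairs
    intro v e he heq
    obtain ⟨z, hz, rfl⟩ := hdecomp e he
    rw [hfePar z hz] at heq
    simp only [hfv] at heq
    have h1 := (vval_eq_eval hkN hn2 hcd hccmono hdist (by omega) (hidxN v) (hidxN z) heq).1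
    rw [hidxinj h1]
    exact Sym2.mem_mk_right _ _
  · -- nonneg
    intro u
    simp only [hfv]
    exact vval_nonneg hkN hn2 (idx u)
  · -- fe ≤ n
    intro e he
    obtain ⟨z, hz, rfl⟩ := hdecomp e he
    rw [hfePar z hz]
    exact eval_le_n hkN hn2 hcd (by omega) (hidxN z)
  · -- minimum vertex
    refine ⟨vtx 0, ?_⟩
    simp only [hfv]
    rw [hright 0 (by omega), vval_zero]
  · -- critical values are naturals
    intro x hx
    rcases hx with ⟨v, hv, hvx⟩ | ⟨e, he, hex⟩
    · have hle := hcvle v hv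
      rcases Nat.eq_zero_or_pos (idx v) with h0 | h1
      · refine ⟨0, ?_⟩
        rw [← hvx]
        simp only [hfv]
        rw [h0, vval_zero]
        simp
      · refine ⟨cc (idx v), ?_⟩
        rw [← hvx]
        simp only [hfv]
        rw [vval_low h1 hle]
    · obtain ⟨z, h1, h2, rfl⟩ := hcele e he
      refine ⟨dd (idx z), ?_⟩
      rw [← hex, hfePar z (by omega), eval_low h2]
  · -- the persistence diagram is D
    intro c d
    constructor
    · intro hcdD
      obtain ⟨i, hi1, hi2, hci, hdi⟩ := hsurp (c, d) hcdD
      have hzi : idx (vtx i) = i := hright i (by omega)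
      refine ⟨vtx i, s(P (vtx i), vtx i), hcvtx (vtx i) (by omega),
        hcedge (vtx i) (by omega) (by omega), ?_, ?_, hdies i hi1 hi2⟩
      · simp only [hfv]
        rw [hzi, vval_low hi1 hi2, hci]
      · rw [hfePar _ (by omega), hzi, eval_low hi2, hdi]
    · rintro ⟨v, e, hcv, hce, hfvc, hfed, hdies'⟩
      obtain ⟨z, hz1, hz2, rfl⟩ := hcele e hce
      have hiv := hcvle v hcv
      have hfeE : fe s(P z, z) = (dd (idx z) : ℝ) := by
        rw [hfePar z (by omega), eval_low hz2]
      have hdval : dd (idx z) = d := by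
        have h1 : ((dd (idx z)) : ℝ) = (d : ℝ) := by rw [← hfeE, hfed]
        exact_mod_cast h1
      obtain ⟨a, b, heab, hnr, hrav, hmin, u, hru, hufv⟩ := hdies'
      have hv1 : 1 ≤ idx v := by
        by_contra h0
        push_neg at h0
        have h00 : idx v = 0 := by omega
        have hfv0 : fv v = 0 := by simp only [hfv]; rw [h00, vval_zero]
        have h3 : fv u < 0 := by rw [← hfv0]; exact hufv
        have h4 : 0 ≤ fv u := vval_nonneg hkN hn2 (idx u)
        linarith
      have hij : idx v = idx z := by
        by_contra hne
        have hvz0 : idx v ≠ 0 := by omega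
        have hddne : dd (idx v) ≠ dd (idx z) := (hdist _ _ hv1 hiv hz1 hz2 hne).2.2.2
        rcases Nat.lt_or_ge (dd (idx v)) (dd (idx z)) with hlt | hge
        · have hadj2 : (levelGraphLt T fe (fe s(P z, z))).Adj v (P v) := by
            rw [levelGraphLt_adj]
            refine ⟨(hPfacts v hvz0).1.symm, ?_, ?_⟩
            · rw [Sym2.eq_swap, hfePar v hvz0, eval_low hiv, hfeE]
              exact_mod_cast hlt
            · intro hvv
              have h5 := hPlt' v hvz0
              have h6 := congrArg idx hvv
              omega
          have h7 := hmin (P v) (hrav.trans hadj2.reachable)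
          have h8 : fv (P v) < fv v := by
            simp only [hfv]
            exact vval_mono hkN hn2 hcd hccmono (hPlt' v hvz0) (hidxN v)
          linarith
        · have hgt : dd (idx z) < dd (idx v) := by omega
          have hlev : fe s(P z, z) ≤ fe s(P v, v) := by
            rw [hfeE, hfePar v hvz0, eval_low hiv]
            exact_mod_cast le_of_lt hgt
          have hWa : WRel idx P v a := (hconf v hvz0 _ hlev _ _ hrav).2 WRel.rfl'
          have hWb : WRel idx P v b := by
            rcases Sym2.eq_iff.1 heab with ⟨ha', hb'⟩ | ⟨hb', ha'⟩
            · rw [← hb']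
              rw [← ha'] at hWa
              exact WRel.child hWa (by omega) rfl
            · rw [← hb']
              rw [← ha'] at hWa
              have hzv : z ≠ v := by
                intro hzz
                apply hne
                rw [hzz]
              exact (WRel.parent hWa hzv).2
          have hWu : WRel idx P v u := (hconf v hvz0 _ hlev _ _ hru).1 hWb
          have h9 := WRel.idx_le hPlt' hWu
          have h10 : fv v ≤ fv u := by
            simp only [hfv]
            exact vval_mono_le hkN hn2 hcd hccmono h9 (hidxN u)
          linarith
      have hcval : cc (idx v) = c := by
        have h1 : ((cc (idx v)) : ℝ) = (c : ℝ) := by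
          rw [← vval_low hv1 hiv]
          simp only [hfv] at hfvc
          exact hfvc
        exact_mod_cast h1
      have hfin := hpairD (idx v) hv1 hiv
      rw [hcval, hij, hdval] at hfin
      exact hfin
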